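/- Let F = GF(q), R = F[x_1,...,x_n], L the ideal of field equations, and J ⊆ R an ideal. Then J + L is a radical ideal of R. -/

import Mathlib

open MvPolynomial

/-- Key lemma: in `F[x₁,…,xₙ]` with `F = GF(q)`, `f^q - f` lies in the field-equation
ideal for every `f`. -/
theorem stmt2_aux (F : Type) [Field F] [Fintype F] (q : ℕ) (hq : Fintype.card F = q)
    (n : ℕ) (L : Ideal (MvPolynomial (Fin n) F))
    (hL : L = Ideal.span (Set.range fun i : Fin n => (X i : MvPolynomial (Fin n) F) ^ q - X i))
    (f : MvPolynomial (Fin n) F) : f ^ q - f ∈ L := by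
  set p := ringChar F with hpdef
  have hp : p.Prime := CharP.char_is_prime F p
  haveI : Fact p.Prime := ⟨hp⟩
  obtain ⟨k, -, hcard⟩ := FiniteField.card F p
  haveI : ExpChar (MvPolynomial (Fin n) F) p := ExpChar.prime hp
  have hqpk : q = p ^ (k : ℕ) := by rw [← hq, hcard]
  -- pass to the quotient
  rw [← Ideal.Quotient.eq_zero_iff_mem, map_sub, sub_eq_zero]
  -- compare two ring homs: Frobenius-power then quotient, versus quotient
  have key : (Ideal.Quotient.mk L).comp ((iterateFrobenius (MvPolynomial (Fin n) F) p k)) =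
      Ideal.Quotient.mk L := by
    apply MvPolynomial.ringHom_ext
    · intro a
      have ha : a ^ q = a := by rw [← hq]; exact FiniteField.pow_card a
      simp only [RingHom.comp_apply, iterateFrobenius_def, ← map_pow, ← hqpk, ha]
    · intro i
      simp only [RingHom.comp_apply, iterateFrobenius_def, ← hqpk]
      rw [← sub_eq_zero, ← map_sub, Ideal.Quotient.eq_zero_iff_mem, hL]
      exact Ideal.subset_span ⟨i, rfl⟩
  have := congrArg (fun g => g f) key
  simpa [iterateFrobenius_def, ← hqpk] using this

/-- For `F = GF(q)`, any ideal `J ⊆ F[x₁,…,xₙ]` and the field-equation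
ideal `L`, the ideal `J + L` is radical. -/
theorem stmt2 (F : Type) [Field F] [Fintype F] (q : ℕ) (hq : Fintype.card F = q)
    (n : ℕ) (J L : Ideal (MvPolynomial (Fin n) F))
    (hL : L = Ideal.span (Set.range fun i : Fin n => (X i : MvPolynomial (Fin n) F) ^ q - X i)) :
    (J ⊔ L).IsRadical := by
  intro a ha
  obtain ⟨m, hm⟩ := ha
  set I := J ⊔ L with hI
  rw [← Ideal.Quotient.eq_zero_iff_mem]
  have hq2 : 1 < q := hq ▸ Fintype.one_lt_card
  set b : MvPolynomial (Fin n) F ⧸ I := Ideal.Quotient.mk I a with hb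
  have hbq : b ^ q = b := by
    rw [hb, ← map_pow, Ideal.Quotient.mk_eq_mk_iff_sub_mem]
    exact Ideal.mem_sup_right (stmt2_aux F q hq n L hL a)
  have hbm : b ^ m = 0 := by
    rw [hb, ← map_pow, Ideal.Quotient.eq_zero_iff_mem]; exact hm
  have hiter : ∀ t : ℕ, b ^ q ^ t = b := by
    intro t
    induction t with
    | zero => simp
    | succ t ih => rw [pow_succ, pow_mul, ih, hbq]
  have hle : m ≤ q ^ m := le_of_lt (Nat.lt_pow_self hq2 : m < q ^ m)
  calc b = b ^ q ^ m := (hiter m).symm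
    _ = b ^ m * b ^ (q ^ m - m) := by rw [← pow_add, Nat.add_sub_cancel' hle]
    _ = 0 := by rw [hbm, zero_mul]
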